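/- There exists a constant C > 0, independent of k and t, such that |d_k(t)| ≤ C t² for all t, k ∈ ℝ. -/

import Mathlib

open MeasureTheory intervalIntegral

theorem stmt_4 (b : ℝ → ℝ) (bm bp : ℝ) (hb : Continuous b)
    (hbm : 0 < bm) (hlow : ∀ x, bm ≤ b x) (hup : ∀ x, b x ≤ bp)
    (a ainv : ℝ → ℝ) (ha : ∀ x, a x = ∫ t in (0:ℝ)..x, b t)
    (hleft : ∀ x, ainv (a x) = x) (hright : ∀ k, a (ainv k) = k) :
    ∃ C > 0, ∀ k t : ℝ,
      |(a ((Real.sqrt bp)⁻¹ * t + ainv k) - k) ^ 2 / bp - t ^ 2| ≤ C * t ^ 2 := by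
  have hbp : 0 < bp := hbm.trans_le ((hlow 0).trans (hup 0))
  refine ⟨1, one_pos, fun k t => ?_⟩
  set x := ainv k with hx
  set h := (Real.sqrt bp)⁻¹ * t with hh
  have hint : ∀ u v : ℝ, IntervalIntegrable b volume u v :=
    fun u v => hb.intervalIntegrable u v
  have key : a (h + x) - k = ∫ s in x..(h + x), b s := by
    conv_lhs => rw [ha, ← hright k, ha]
    rw [← intervalIntegral.integral_add_adjacent_intervals (hint 0 x) (hint x (h + x))]
    ring
  have hbound : |a (h + x) - k| ≤ bp * |h| := by
    rw [key]
    have := intervalIntegral.norm_integral_le_of_norm_le_const (C := bp)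
      (f := b) (a := x) (b := h + x) (fun s _ => by
        rw [Real.norm_eq_abs, abs_of_pos (hbm.trans_le (hlow s))]
        exact hup s)
    simpa using this
  have hsq : (a (h + x) - k) ^ 2 ≤ bp ^ 2 * h ^ 2 := by
    have := mul_self_le_mul_self (abs_nonneg _) hbound
    have hab : |a (h + x) - k| * |a (h + x) - k| = (a (h + x) - k) ^ 2 := by
      rw [← abs_mul, ← sq, abs_sq]
    nlinarith [abs_nonneg h, sq_abs h]
  have hh2 : h ^ 2 = t ^ 2 / bp := by
    rw [hh, mul_pow, inv_pow, Real.sq_sqrt hbp.le]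
    ring
  have hupper : (a (h + x) - k) ^ 2 / bp ≤ t ^ 2 := by
    rw [div_le_iff₀ hbp]
    calc (a (h + x) - k) ^ 2 ≤ bp ^ 2 * h ^ 2 := hsq
      _ = t ^ 2 * bp := by rw [hh2]; field_simp
  have hlower : 0 ≤ (a (h + x) - k) ^ 2 / bp := div_nonneg (sq_nonneg _) hbp.le
  rw [abs_le]
  constructor <;> nlinarith [sq_nonneg t]
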